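/- Let r > L and suppose F(·, y) is L-weakly convex on closed convex X for each y, and F(x, ·) is concave and continuous on compact convex Y. Define the primal update x^{k+1} = argmin_{x ∈ X}{F_{x^k,λ}(x, y^k) + (r/2)‖x − z^k‖²}, where F_{x̄,λ}(x, y) = h_y(c_y(x̄) + ∇c_y(x̄)ᵀ(x − x̄)) + (λ/2)‖x − x̄‖² is the proximal-linear model, and let x_r(y^k, z^k) = argmin_{x ∈ X}{F(x, y^k) + (r/2)‖x − z^k‖²}. Then ‖x^{k+1} − x_r(y^k, z^k)‖ ≤ ζ‖x^k − x^{k+1}‖ with ζ = (2(r−L)^{−1} + (λ+L)^{−1})/((λ+L)^{−1}) · (√(2L/(λ+L)) + 1). -/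

import Mathlib

open scoped RealInnerProductSpace
open Set

/-- Taylor bound with Lipschitz Jacobian, with the sharp factor `1/2`. -/
private lemma taylor_half {E F : Type*} [NormedAddCommGroup E] [NormedSpace ℝ E]
    [NormedAddCommGroup F] [NormedSpace ℝ F]
    (c : E → F) (c' : E → E →L[ℝ] F) (X : Set E) (hXc : Convex ℝ X) (Lc : ℝ)
    (hderiv : ∀ x, HasFDerivAt c (c' x) x)
    (hjac : ∀ x ∈ X, ∀ x' ∈ X, ‖c' x - c' x'‖ ≤ Lc * ‖x - x'‖)
    (a b : E) (ha : a ∈ X) (hb : b ∈ X) :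
    ‖c b - c a - c' a (b - a)‖ ≤ Lc / 2 * ‖b - a‖ ^ 2 := by
  set v := b - a with hv
  set f : ℝ → F := fun t => c (a + t • v) - c a - t • (c' a v) with hf
  have hline : ∀ t : ℝ, HasDerivAt (fun s : ℝ => a + s • v) v t := by
    intro t
    simpa using ((hasDerivAt_id t).smul_const v).const_add a
  have hf' : ∀ t : ℝ, HasDerivAt f (c' (a + t • v) v - c' a v) t := by
    intro t
    have h1 : HasDerivAt (fun s : ℝ => c (a + s • v)) (c' (a + t • v) v) t :=
      (hderiv (a + t • v)).comp_hasDerivAt t (hline t)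
    have h2 : HasDerivAt (fun s : ℝ => s • (c' a v)) (c' a v) t := by
      simpa using (hasDerivAt_id t).smul_const (c' a v)
    exact (h1.sub_const (c a)).sub h2
  have hmem : ∀ t ∈ Icc (0:ℝ) 1, a + t • v ∈ X := by
    intro t ht
    have h := hXc ha hb (sub_nonneg.2 ht.2) ht.1 (by ring)
    convert h using 1
    module
  have hBderiv : ∀ t : ℝ, HasDerivAt (fun s : ℝ => Lc * ‖v‖ ^ 2 * (s ^ 2 / 2))
      (Lc * ‖v‖ ^ 2 * t) t := by
    intro t
    have h := ((hasDerivAt_pow 2 t).div_const 2).const_mul (Lc * ‖v‖ ^ 2)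
    exact h.congr_deriv (by norm_num)
  have bound : ∀ t ∈ Ico (0:ℝ) 1, ‖c' (a + t • v) v - c' a v‖ ≤ Lc * ‖v‖ ^ 2 * t := by
    intro t ht
    have h1 : c' (a + t • v) v - c' a v = (c' (a + t • v) - c' a) v := by
      simp [ContinuousLinearMap.sub_apply]
    rw [h1]
    have h2 : ‖c' (a + t • v) - c' a‖ ≤ Lc * (t * ‖v‖) := by
      have h3 := hjac (a + t • v) (hmem t ⟨ht.1, ht.2.le⟩) a ha
      have h4 : ‖a + t • v - a‖ = t * ‖v‖ := by
        rw [add_sub_cancel_left, norm_smul, Real.norm_eq_abs, abs_of_nonneg ht.1]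
      rw [h4] at h3
      exact h3
    calc ‖(c' (a + t • v) - c' a) v‖ ≤ ‖c' (a + t • v) - c' a‖ * ‖v‖ :=
          (c' (a + t • v) - c' a).le_opNorm v
      _ ≤ Lc * (t * ‖v‖) * ‖v‖ :=
          mul_le_mul_of_nonneg_right h2 (norm_nonneg _)
      _ = Lc * ‖v‖ ^ 2 * t := by ring
  have key := image_norm_le_of_norm_deriv_right_le_deriv_boundary
    (f := f) (f' := fun t => c' (a + t • v) v - c' a v) (a := 0) (b := 1)
    (fun t _ => (hf' t).continuousAt.continuousWithinAt)
    (fun t _ => (hf' t).hasDerivWithinAt)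
    (by simp [hf])
    hBderiv
    bound
    (right_mem_Icc.2 zero_le_one)
  have hab : a + v = b := by rw [hv]; abel
  have hone : f 1 = c b - c a - c' a (b - a) := by
    simp [hf, hab, hv]
  rw [hone] at key
  calc ‖c b - c a - c' a (b - a)‖ ≤ Lc * ‖v‖ ^ 2 * ((1:ℝ) ^ 2 / 2) := key
    _ = Lc / 2 * ‖b - a‖ ^ 2 := by rw [hv]; ring

/-- Growth inequality at a constrained minimizer of a strongly convex function. -/
private lemma strong_growth {E : Type*} [NormedAddCommGroup E] [NormedSpace ℝ E]
    (f : E → ℝ) (X : Set E) (hXc : Convex ℝ X) (μ : ℝ) (hμ : 0 ≤ μ)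
    (hsc : ∀ a ∈ X, ∀ b ∈ X, ∀ t ∈ Icc (0:ℝ) 1,
      f ((1-t) • a + t • b) ≤ (1-t) * f a + t * f b - μ/2 * (t * (1-t) * ‖a - b‖ ^ 2))
    (xs : E) (hxs : xs ∈ X) (hmin : IsMinOn f X xs) (x : E) (hx : x ∈ X) :
    f xs + μ/2 * ‖x - xs‖ ^ 2 ≤ f x := by
  set D := ‖x - xs‖ ^ 2 with hD
  have hDnn : 0 ≤ D := by positivity
  have key : ∀ t ∈ Ioc (0:ℝ) 1, f xs + μ/2 * ((1-t) * D) ≤ f x := by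
    intro t ht
    have hmemp : (1-t) • xs + t • x ∈ X :=
      hXc hxs hx (by linarith [ht.2]) ht.1.le (by ring)
    have h1 := hsc xs hxs x hx t ⟨ht.1.le, ht.2⟩
    have h2 : f xs ≤ f ((1-t) • xs + t • x) := isMinOn_iff.mp hmin _ hmemp
    have hns : ‖xs - x‖ ^ 2 = D := by rw [hD, norm_sub_rev]
    rw [hns] at h1
    have h3 : t * (f xs + μ/2 * ((1-t) * D)) ≤ t * f x := by nlinarith
    exact le_of_mul_le_mul_left h3 ht.1
  refine le_of_forall_sub_le fun ε hε => ?_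
  set cc := μ/2 * D with hcc
  have hccnn : 0 ≤ cc := by positivity
  set t := min 1 (ε / (cc + 1)) with htdef
  have ht0 : 0 < t := lt_min one_pos (by positivity)
  have ht1 : t ≤ 1 := min_le_left _ _
  have h4 := key t ⟨ht0, ht1⟩
  have h5 : cc * t ≤ ε := by
    have h6 : cc * t ≤ cc * (ε / (cc + 1)) :=
      mul_le_mul_of_nonneg_left (min_le_right _ _) hccnn
    have h7 : cc * (ε / (cc + 1)) ≤ ε := by
      rw [mul_div_assoc']
      rw [div_le_iff₀ (by linarith)]
      nlinarith
    linarith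
  nlinarith [h4]

/-- Quadratic expansion of convex combinations in a real inner product space. -/
private lemma combo_sq {E : Type*} [NormedAddCommGroup E] [InnerProductSpace ℝ E]
    (a b z : E) (t : ℝ) :
    ‖((1-t) • a + t • b) - z‖ ^ 2
      = (1-t) * ‖a - z‖ ^ 2 + t * ‖b - z‖ ^ 2 - t * (1-t) * ‖a - b‖ ^ 2 := by
  have h : ((1-t) • a + t • b) - z = (1-t) • (a - z) + t • (b - z) := by module
  have h2 : ‖a - b‖ ^ 2 = ‖a - z‖ ^ 2 - 2 * ⟪a - z, b - z⟫ + ‖b - z‖ ^ 2 := by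
    rw [show a - b = (a - z) - (b - z) by abel, norm_sub_sq_real]
  rw [h, norm_add_sq_real, h2, norm_smul, norm_smul,
    real_inner_smul_left, real_inner_smul_right, Real.norm_eq_abs, Real.norm_eq_abs,
    mul_pow, mul_pow, sq_abs, sq_abs]
  ring

set_option maxHeartbeats 1000000 in

/-- Lipschitz-type primal error bound for the proximal linear step: the distance from the
prox-linear update `x^{k+1}` to the exact proximal point `x_r(y^k, z^k)` is bounded by
`ζ ‖x^k - x^{k+1}‖` with
`ζ = (2(r-L)⁻¹ + (λ+L)⁻¹)/((λ+L)⁻¹) · (√(2L/(λ+L)) + 1)`, `L = L_h L_c`. -/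
theorem prox_linear_primal_error_bound (n d m : ℕ)
    (X : Set (EuclideanSpace ℝ (Fin n))) (Y : Set (EuclideanSpace ℝ (Fin d)))
    (h : EuclideanSpace ℝ (Fin d) → EuclideanSpace ℝ (Fin m) → ℝ)
    (c : EuclideanSpace ℝ (Fin d) → EuclideanSpace ℝ (Fin n) → EuclideanSpace ℝ (Fin m))
    (c' : EuclideanSpace ℝ (Fin d) → EuclideanSpace ℝ (Fin n) →
      (EuclideanSpace ℝ (Fin n) →L[ℝ] EuclideanSpace ℝ (Fin m)))
    (Lh Lc lam r : ℝ)
    (xk zk xk1 xr : EuclideanSpace ℝ (Fin n)) (yk : EuclideanSpace ℝ (Fin d))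
    (hX : IsClosed X) (hXc : Convex ℝ X)
    (hYcomp : IsCompact Y) (hYc : Convex ℝ Y)
    (hLh : 0 < Lh) (hLc : 0 < Lc) (hlam : 0 < lam)
    (hr : Lh * Lc < r)
    (hconv : ∀ y, ConvexOn ℝ Set.univ (h y))
    (hlip : ∀ y z z', |h y z - h y z'| ≤ Lh * ‖z - z'‖)
    (hderiv : ∀ y x, HasFDerivAt (c y) (c' y x) x)
    (hjac : ∀ y, ∀ x ∈ X, ∀ x' ∈ X, ‖c' y x - c' y x'‖ ≤ Lc * ‖x - x'‖)
    (hconc : ∀ x ∈ X, ConcaveOn ℝ Y (fun y => h y (c y x)))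
    (hcont : ∀ x ∈ X, ContinuousOn (fun y => h y (c y x)) Y)
    (hyk : yk ∈ Y) (hxk : xk ∈ X)
    (hxk1 : xk1 ∈ X)
    (hmin1 : IsMinOn (fun x => h yk (c yk xk + (c' yk xk) (x - xk)) +
      lam / 2 * ‖x - xk‖ ^ 2 + r / 2 * ‖x - zk‖ ^ 2) X xk1)
    (hxr : xr ∈ X)
    (hmin2 : IsMinOn (fun x => h yk (c yk x) + r / 2 * ‖x - zk‖ ^ 2) X xr) :
    ‖xk1 - xr‖ ≤
      ((2 * (r - Lh * Lc)⁻¹ + (lam + Lh * Lc)⁻¹) / (lam + Lh * Lc)⁻¹) *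
        (Real.sqrt (2 * (Lh * Lc) / (lam + Lh * Lc)) + 1) * ‖xk - xk1‖ := by
  have hL : 0 < Lh * Lc := mul_pos hLh hLc
  have hA : 0 < r - Lh * Lc := sub_pos.2 hr
  have hBp : 0 < lam + Lh * Lc := by linarith
  -- model error bound
  have hB : ∀ w ∈ X, ∀ x ∈ X,
      |h yk (c yk x) - h yk (c yk w + c' yk w (x - w))| ≤ Lh * Lc / 2 * ‖x - w‖ ^ 2 := by
    intro w hw x hx
    have h1 := hlip yk (c yk x) (c yk w + c' yk w (x - w))
    have h2 := taylor_half (c yk) (c' yk) X hXc Lc (hderiv yk) (hjac yk) w x hw hx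
    have h3 : c yk x - (c yk w + c' yk w (x - w)) = c yk x - c yk w - c' yk w (x - w) := by
      abel
    rw [h3] at h1
    calc |h yk (c yk x) - h yk (c yk w + c' yk w (x - w))|
        ≤ Lh * ‖c yk x - c yk w - c' yk w (x - w)‖ := h1
      _ ≤ Lh * (Lc / 2 * ‖x - w‖ ^ 2) := mul_le_mul_of_nonneg_left h2 hLh.le
      _ = Lh * Lc / 2 * ‖x - w‖ ^ 2 := by ring
  -- convexity of the linearized model at base `w`
  have hlin : ∀ w : EuclideanSpace ℝ (Fin n), ∀ a b : EuclideanSpace ℝ (Fin n),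
      ∀ t ∈ Icc (0:ℝ) 1,
      h yk (c yk w + c' yk w (((1-t) • a + t • b) - w))
        ≤ (1-t) * h yk (c yk w + c' yk w (a - w)) + t * h yk (c yk w + c' yk w (b - w)) := by
    intro w a b t ht
    have harg : c yk w + c' yk w (((1-t) • a + t • b) - w)
        = (1-t) • (c yk w + c' yk w (a - w)) + t • (c yk w + c' yk w (b - w)) := by
      have h1 : ((1-t) • a + t • b) - w = (1-t) • (a - w) + t • (b - w) := by module
      rw [h1, map_add, map_smul, map_smul]
      module
    rw [harg]
    have h2 := (hconv yk).2 (Set.mem_univ (c yk w + c' yk w (a - w)))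
      (Set.mem_univ (c yk w + c' yk w (b - w))) (sub_nonneg.2 ht.2) ht.1 (by ring)
    simpa [smul_eq_mul] using h2
  -- weak convexity of F = h yk ∘ c yk
  have hwc : ∀ a ∈ X, ∀ b ∈ X, ∀ t ∈ Icc (0:ℝ) 1,
      h yk (c yk ((1-t) • a + t • b)) ≤ (1-t) * h yk (c yk a) + t * h yk (c yk b)
        + Lh * Lc / 2 * (t * (1-t) * ‖a - b‖ ^ 2) := by
    intro a ha b hb t ht
    set w := (1-t) • a + t • b with hwdef
    have hwX : w ∈ X := hXc ha hb (sub_nonneg.2 ht.2) ht.1 (by ring)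
    have h1 := hlin w a b t ht
    have h1' : h yk (c yk w) ≤ (1-t) * h yk (c yk w + c' yk w (a - w))
        + t * h yk (c yk w + c' yk w (b - w)) := by
      rw [← hwdef, sub_self, map_zero, add_zero] at h1
      exact h1
    have hna : ‖a - w‖ ^ 2 = t ^ 2 * ‖a - b‖ ^ 2 := by
      have e : a - w = t • (a - b) := by rw [hwdef]; module
      rw [e, norm_smul, Real.norm_eq_abs, mul_pow, sq_abs]
    have hnb : ‖b - w‖ ^ 2 = (1-t) ^ 2 * ‖a - b‖ ^ 2 := by
      have e : b - w = (1-t) • (b - a) := by rw [hwdef]; module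
      rw [e, norm_smul, Real.norm_eq_abs, mul_pow, sq_abs, norm_sub_rev]
    have ha' := (abs_le.mp (hB w hwX a ha)).1
    have hb' := (abs_le.mp (hB w hwX b hb)).1
    rw [hna] at ha'
    rw [hnb] at hb'
    have ha'' : h yk (c yk w + c' yk w (a - w))
        ≤ h yk (c yk a) + Lh * Lc / 2 * (t ^ 2 * ‖a - b‖ ^ 2) := by linarith
    have hb'' : h yk (c yk w + c' yk w (b - w))
        ≤ h yk (c yk b) + Lh * Lc / 2 * ((1-t) ^ 2 * ‖a - b‖ ^ 2) := by linarith
    have hc1 := mul_le_mul_of_nonneg_left ha'' (sub_nonneg.2 ht.2)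
    have hc2 := mul_le_mul_of_nonneg_left hb'' ht.1
    linarith [h1', hc1, hc2]
  -- strong convexity of the exact objective
  have hφsc : ∀ a ∈ X, ∀ b ∈ X, ∀ t ∈ Icc (0:ℝ) 1,
      h yk (c yk ((1-t) • a + t • b)) + r / 2 * ‖((1-t) • a + t • b) - zk‖ ^ 2
        ≤ (1-t) * (h yk (c yk a) + r / 2 * ‖a - zk‖ ^ 2)
          + t * (h yk (c yk b) + r / 2 * ‖b - zk‖ ^ 2)
          - (r - Lh * Lc)/2 * (t * (1-t) * ‖a - b‖ ^ 2) := by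
    intro a ha b hb t ht
    have h1 := hwc a ha b hb t ht
    have h2 : r / 2 * ‖((1-t) • a + t • b) - zk‖ ^ 2
        = r / 2 * ((1-t) * ‖a - zk‖ ^ 2 + t * ‖b - zk‖ ^ 2 - t * (1-t) * ‖a - b‖ ^ 2) := by
      rw [combo_sq]
    linarith [h1, h2]
  -- strong convexity of the model objective
  have hψsc : ∀ a ∈ X, ∀ b ∈ X, ∀ t ∈ Icc (0:ℝ) 1,
      h yk (c yk xk + (c' yk xk) (((1-t) • a + t • b) - xk))
          + lam / 2 * ‖((1-t) • a + t • b) - xk‖ ^ 2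
          + r / 2 * ‖((1-t) • a + t • b) - zk‖ ^ 2
        ≤ (1-t) * (h yk (c yk xk + (c' yk xk) (a - xk)) + lam / 2 * ‖a - xk‖ ^ 2
            + r / 2 * ‖a - zk‖ ^ 2)
          + t * (h yk (c yk xk + (c' yk xk) (b - xk)) + lam / 2 * ‖b - xk‖ ^ 2
            + r / 2 * ‖b - zk‖ ^ 2)
          - (lam + r)/2 * (t * (1-t) * ‖a - b‖ ^ 2) := by
    intro a ha b hb t ht
    have h1 := hlin xk a b t ht
    have h2 : lam / 2 * ‖((1-t) • a + t • b) - xk‖ ^ 2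
        = lam / 2 * ((1-t) * ‖a - xk‖ ^ 2 + t * ‖b - xk‖ ^ 2 - t * (1-t) * ‖a - b‖ ^ 2) := by
      rw [combo_sq]
    have h3 : r / 2 * ‖((1-t) • a + t • b) - zk‖ ^ 2
        = r / 2 * ((1-t) * ‖a - zk‖ ^ 2 + t * ‖b - zk‖ ^ 2 - t * (1-t) * ‖a - b‖ ^ 2) := by
      rw [combo_sq]
    linarith [h1, h2, h3]
  -- growth inequalities at the two minimizers
  have G1 : h yk (c yk xr) + r / 2 * ‖xr - zk‖ ^ 2
      + (r - Lh * Lc)/2 * ‖xk1 - xr‖ ^ 2 ≤ h yk (c yk xk1) + r / 2 * ‖xk1 - zk‖ ^ 2 :=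
    strong_growth (fun x => h yk (c yk x) + r / 2 * ‖x - zk‖ ^ 2) X hXc (r - Lh * Lc)
      (by linarith) hφsc xr hxr hmin2 xk1 hxk1
  have G2 : h yk (c yk xk + (c' yk xk) (xk1 - xk)) + lam / 2 * ‖xk1 - xk‖ ^ 2
      + r / 2 * ‖xk1 - zk‖ ^ 2 + (lam + r)/2 * ‖xr - xk1‖ ^ 2
      ≤ h yk (c yk xk + (c' yk xk) (xr - xk)) + lam / 2 * ‖xr - xk‖ ^ 2
        + r / 2 * ‖xr - zk‖ ^ 2 :=
    strong_growth (fun x => h yk (c yk xk + (c' yk xk) (x - xk)) + lam / 2 * ‖x - xk‖ ^ 2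
        + r / 2 * ‖x - zk‖ ^ 2) X hXc (lam + r) (by linarith) hψsc xk1 hxk1 hmin1 xr hxr
  -- bridges between exact and model objectives
  have br1 := (abs_le.mp (hB xk hxk xk1 hxk1)).2
  have br2 := (abs_le.mp (hB xk hxk xr hxr)).1
  -- triangle inequality
  have htr : ‖xr - xk‖ ≤ ‖xr - xk1‖ + ‖xk1 - xk‖ := by
    simpa [dist_eq_norm] using dist_triangle xr xk1 xk
  have hq2 : ‖xr - xk‖ ^ 2 ≤ (‖xr - xk1‖ + ‖xk1 - xk‖) ^ 2 :=
    pow_le_pow_left₀ (norm_nonneg _) htr 2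
  have hq2' := mul_le_mul_of_nonneg_left hq2
    (show (0:ℝ) ≤ (Lh * Lc + lam)/2 by positivity)
  have e1 : ‖xr - xk1‖ = ‖xk1 - xr‖ := norm_sub_rev _ _
  have e2 : ‖xk1 - xk‖ = ‖xk - xk1‖ := norm_sub_rev _ _
  rw [e1] at G2 hq2'
  rw [e2] at G2 br1 hq2'
  -- the key quadratic inequality
  have key : (r - Lh * Lc) * ‖xk1 - xr‖ ^ 2
      ≤ (lam + Lh * Lc) * (‖xk1 - xr‖ * ‖xk - xk1‖) + Lh * Lc * ‖xk - xk1‖ ^ 2 := by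
    nlinarith [G1, G2, br1, br2, hq2']
  -- derive the linear bound
  have hbound : ‖xk1 - xr‖ ≤ (2 * (lam + Lh * Lc) / (r - Lh * Lc) + 1) * ‖xk - xk1‖ := by
    rcases le_or_gt ‖xk1 - xr‖ ‖xk - xk1‖ with hcase | hcase
    · have hZ1 : 0 ≤ 2 * (lam + Lh * Lc) / (r - Lh * Lc) := by positivity
      nlinarith [norm_nonneg (xk - xk1)]
    · have ht0 : 0 < ‖xk1 - xr‖ := lt_of_le_of_lt (norm_nonneg _) hcase
      have hss : ‖xk - xk1‖ * ‖xk - xk1‖ ≤ ‖xk - xk1‖ * ‖xk1 - xr‖ :=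
        mul_le_mul_of_nonneg_left hcase.le (norm_nonneg _)
      have hst : 0 ≤ ‖xk - xk1‖ * ‖xk1 - xr‖ :=
        mul_nonneg (norm_nonneg _) (norm_nonneg _)
      have h1 : (r - Lh * Lc) * ‖xk1 - xr‖ ^ 2
          ≤ 2 * (lam + Lh * Lc) * (‖xk - xk1‖ * ‖xk1 - xr‖) := by
        nlinarith [key, hss, hst, hL, hlam]
      have h2 : ((r - Lh * Lc) * ‖xk1 - xr‖) * ‖xk1 - xr‖
          ≤ (2 * (lam + Lh * Lc) * ‖xk - xk1‖) * ‖xk1 - xr‖ := by nlinarith [h1]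
      have h3 : (r - Lh * Lc) * ‖xk1 - xr‖ ≤ 2 * (lam + Lh * Lc) * ‖xk - xk1‖ :=
        le_of_mul_le_mul_right h2 ht0
      have h4 : ‖xk1 - xr‖ ≤ 2 * (lam + Lh * Lc) / (r - Lh * Lc) * ‖xk - xk1‖ := by
        rw [div_mul_eq_mul_div, le_div_iff₀ hA]
        nlinarith [h3]
      nlinarith [h4, norm_nonneg (xk - xk1)]
  -- conclusion
  have hco : (2 * (r - Lh * Lc)⁻¹ + (lam + Lh * Lc)⁻¹) / (lam + Lh * Lc)⁻¹
      = 2 * (lam + Lh * Lc) / (r - Lh * Lc) + 1 := by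
    field_simp
  rw [hco]
  have hlast : 0 ≤ (2 * (lam + Lh * Lc) / (r - Lh * Lc) + 1)
      * Real.sqrt (2 * (Lh * Lc) / (lam + Lh * Lc)) * ‖xk - xk1‖ := by positivity
  nlinarith [hbound, hlast]
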